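/- If G is a finite group, then the nilpotent residual γ∞(G) is generated by the set of commutators [x,y] such that x, y are elements of G of mutually coprime orders. -/

import Mathlib

open Subgroup

open scoped commutatorElement

/-- Coprime decomposition of an element of a finite group: `g = u * v` where the order of `u`
only involves primes of `m` and the order of `v` is coprime to `m`. -/
lemma exists_mul_decomp {G : Type*} [Group G] [Finite G] (g : G) (m : ℕ) :
    ∃ u v : G, g = u * v ∧ v ∈ Subgroup.zpowers g ∧
      orderOf u ∣ m ^ orderOf g ∧ (orderOf v).Coprime m := by
  set k := orderOf g with hkdef
  have hk0 : k ≠ 0 := (orderOf_pos g).ne'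
  set a := Nat.gcd k (m ^ k) with ha
  have hak : a ∣ k := Nat.gcd_dvd_left _ _
  obtain ⟨b, hab⟩ := hak
  have key : ∀ q : ℕ, q.Prime → q ∣ b → q ∣ m → False := by
    intro q hq hqb hqm
    set e := k.factorization q with he
    have h1 : q ^ e ∣ k := Nat.ordProj_dvd k q
    have h2 : q ^ e ∣ m ^ k := dvd_trans (pow_dvd_pow q (Nat.factorization_lt q hk0).le)
      (pow_dvd_pow_of_dvd hqm k)
    have h3 : q ^ e ∣ a := Nat.dvd_gcd h1 h2
    obtain ⟨a', ha'⟩ := h3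
    obtain ⟨b', hb'⟩ := hqb
    have : q ^ (e + 1) ∣ k := ⟨a' * b', by rw [hab, ha', hb']; ring⟩
    exact Nat.pow_succ_factorization_not_dvd hk0 hq this
  have hcab : Nat.Coprime a b := by
    rw [Nat.coprime_iff_gcd_eq_one]
    by_contra hne
    obtain ⟨q, hq, hqd⟩ := Nat.exists_prime_and_dvd hne
    have hqa : q ∣ a := hqd.trans (Nat.gcd_dvd_left _ _)
    have hqb : q ∣ b := hqd.trans (Nat.gcd_dvd_right _ _)
    exact key q hq hqb (hq.dvd_of_dvd_pow (hqa.trans (Nat.gcd_dvd_right k (m ^ k))))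
  have hbm : Nat.Coprime b m := by
    rw [Nat.coprime_iff_gcd_eq_one]
    by_contra hne
    obtain ⟨q, hq, hqd⟩ := Nat.exists_prime_and_dvd hne
    exact key q hq (hqd.trans (Nat.gcd_dvd_left _ _)) (hqd.trans (Nat.gcd_dvd_right _ _))
  obtain ⟨c, hc1, hc0⟩ := Nat.chineseRemainder hcab 1 0
  have hbc : b ∣ c := (Nat.modEq_zero_iff_dvd).mp hc0
  refine ⟨g ^ c, (g ^ c)⁻¹ * g, by group, ?_, ?_, ?_⟩
  · exact Subgroup.mem_zpowers_iff.mpr ⟨1 - (c : ℤ), by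
      rw [sub_eq_add_neg, zpow_add, zpow_one, zpow_neg, ← zpow_natCast]; group⟩
  · have hua : (g ^ c) ^ a = 1 := by
      rw [← pow_mul]
      apply orderOf_dvd_iff_pow_eq_one.mp
      show orderOf g ∣ c * a
      rw [← hkdef, hab, mul_comm c a]
      exact mul_dvd_mul_left a hbc
    exact (orderOf_dvd_of_pow_eq_one hua).trans (Nat.gcd_dvd_right k (m ^ k))
  · have hv : (g ^ c)⁻¹ * g = g ^ (1 - (c : ℤ)) := by
      rw [sub_eq_add_neg, zpow_add, zpow_one, zpow_neg, ← zpow_natCast]; group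
    have hvb : ((g ^ c)⁻¹ * g) ^ b = 1 := by
      rw [hv, ← zpow_natCast, ← zpow_mul]
      have hdvd : (k : ℤ) ∣ (1 - (c : ℤ)) * (b : ℤ) := by
        have h1 : (a : ℤ) ∣ (1 : ℤ) - (c : ℤ) := by
          have := (Nat.ModEq.dvd hc1 : (a : ℤ) ∣ (1 : ℕ) - (c : ℕ))
          simpa using this
        obtain ⟨t, ht⟩ := h1
        exact ⟨t, by rw [ht, hab]; push_cast; ring⟩
      obtain ⟨t, ht⟩ := hdvd
      rw [ht, zpow_mul, zpow_natCast, pow_orderOf_eq_one, one_zpow]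
    exact Nat.Coprime.coprime_dvd_left (orderOf_dvd_of_pow_eq_one hvb) hbm

lemma central_commutator_pow {G : Type*} [Group G] {x y : G}
    (hz : ⁅x, y⁆ ∈ Subgroup.center G) (n : ℕ) :
    x ^ n * y = ⁅x, y⁆ ^ n * y * x ^ n := by
  set z := ⁅x, y⁆ with hzdef
  have hcom : ∀ w : G, Commute z w := fun w => ((Subgroup.mem_center_iff.mp hz) w).symm
  have hxy : x * y = z * y * x := by
    rw [hzdef, commutatorElement_def]; group
  induction n with
  | zero => simp
  | succ n ih =>
    calc x ^ (n + 1) * y = x * (x ^ n * y) := by rw [pow_succ']; group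
      _ = x * (z ^ n * y * x ^ n) := by rw [ih]
      _ = (x * z ^ n) * y * x ^ n := by group
      _ = (z ^ n * x) * y * x ^ n := by rw [← ((hcom x).pow_left n).eq]
      _ = z ^ n * (x * y) * x ^ n := by group
      _ = z ^ n * (z * y * x) * x ^ n := by rw [hxy]
      _ = z ^ (n + 1) * y * x ^ (n + 1) := by rw [pow_succ, pow_succ']; group

lemma commute_of_coprime_orderOf_aux :
    ∀ (G : Type) [Group G] [Group.IsNilpotent G],
      ∀ x y : G, (orderOf x).Coprime (orderOf y) → Commute x y := by
  intro G instG instN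
  refine nilpotent_center_quotient_ind
    (P := fun G _ _ => ∀ x y : G, (orderOf x).Coprime (orderOf y) → Commute x y) G ?_ ?_
  · intro G _ _ x y _; exact Subsingleton.elim (x * y) (y * x)
  · intro G _ _ ih x y hxy
    rcases eq_or_ne (orderOf x) 0 with h0 | h0
    · have : orderOf y = 1 := (Nat.coprime_zero_left _).mp (h0 ▸ hxy)
      rw [orderOf_eq_one_iff.mp this]; exact Commute.one_right x
    rcases eq_or_ne (orderOf y) 0 with h1 | h1
    · have : orderOf x = 1 := (Nat.coprime_zero_right _).mp (h1 ▸ hxy)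
      rw [orderOf_eq_one_iff.mp this]; exact Commute.one_left y
    have hc : Commute (QuotientGroup.mk' (Subgroup.center G) x)
        (QuotientGroup.mk' (Subgroup.center G) y) := by
      apply ih
      exact Nat.Coprime.coprime_dvd_right (orderOf_map_dvd _ y)
        (Nat.Coprime.coprime_dvd_left (orderOf_map_dvd _ x) hxy)
    have hz : ⁅x, y⁆ ∈ Subgroup.center G := by
      rw [← QuotientGroup.eq_one_iff (N := Subgroup.center G)]
      rw [show ((⁅x, y⁆ : G) : G ⧸ Subgroup.center G) =
        ⁅(QuotientGroup.mk' (Subgroup.center G) x), (QuotientGroup.mk' (Subgroup.center G) y)⁆ from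
        map_commutatorElement (QuotientGroup.mk' _) x y]
      exact commutatorElement_eq_one_iff_commute.mpr hc
    rw [← commutatorElement_eq_one_iff_commute]
    have hdx : orderOf ⁅x, y⁆ ∣ orderOf x := by
      apply orderOf_dvd_of_pow_eq_one
      have h2 := central_commutator_pow hz (orderOf x)
      rw [pow_orderOf_eq_one, one_mul, mul_one] at h2
      exact mul_right_cancel (a := ⁅x, y⁆ ^ orderOf x) (b := y) (c := 1) (by rw [one_mul]; exact h2.symm)
    have hzy : ⁅y, x⁆ ∈ Subgroup.center G := by
      rw [← commutatorElement_inv]; exact inv_mem hz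
    have hdy : orderOf ⁅x, y⁆ ∣ orderOf y := by
      rw [← orderOf_inv, commutatorElement_inv]
      apply orderOf_dvd_of_pow_eq_one
      have h2 := central_commutator_pow hzy (orderOf y)
      rw [pow_orderOf_eq_one, one_mul, mul_one] at h2
      exact mul_right_cancel (a := ⁅y, x⁆ ^ orderOf y) (b := x) (c := 1) (by rw [one_mul]; exact h2.symm)
    have : orderOf ⁅x, y⁆ ∣ 1 := hxy ▸ Nat.dvd_gcd hdx hdy
    rw [orderOf_eq_one_iff.mp (Nat.dvd_one.mp this)]

lemma isNilpotent_of_coprime_commute (G : Type*) [Group G] [Finite G]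
    (h : ∀ x y : G, (orderOf x).Coprime (orderOf y) → Commute x y) :
    Group.IsNilpotent G := by
  refine ((isNilpotent_of_finite_tfae (G := G)).out 0 3).mpr ?_
  intro p hp P
  haveI : Finite (Sylow p G) := by
    exact Finite.of_injective (fun P : Sylow p G => (P : Subgroup G))
      (fun P Q hPQ => Sylow.ext hPQ)
  set W : Subgroup G := Subgroup.closure {g : G | ¬ p ∣ orderOf g} with hWdef
  have hWc : W ≤ Subgroup.centralizer (P : Set G) := by
    rw [hWdef, Subgroup.closure_le]
    intro w hw
    rw [SetLike.mem_coe, Subgroup.mem_centralizer_iff]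
    intro s hsP
    obtain ⟨k, hk⟩ := P.2 ⟨s, hsP⟩
    have hspow : s ^ p ^ k = 1 := by
      have := congrArg Subtype.val hk
      simpa using this
    have hords : orderOf s ∣ p ^ k := orderOf_dvd_of_pow_eq_one hspow
    have hcop : (orderOf s).Coprime (orderOf w) :=
      Nat.Coprime.coprime_dvd_left hords
        (Nat.Coprime.pow_left _ ((Nat.Prime.coprime_iff_not_dvd hp.out).mpr hw))
    exact h s w hcop
  have hWnormal : W.Normal := by
    constructor
    intro w hw g
    rw [hWdef] at hw ⊢
    induction hw using Subgroup.closure_induction with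
    | mem s hs =>
      apply Subgroup.subset_closure
      have : orderOf (g * s * g⁻¹) = orderOf s :=
        (SemiconjBy.orderOf_eq g (by unfold SemiconjBy; group)).symm
      simpa [this] using hs
    | one => simpa using Subgroup.one_mem _
    | mul a b _ _ iha ihb =>
      have : g * (a * b) * g⁻¹ = (g * a * g⁻¹) * (g * b * g⁻¹) := by group
      rw [this]; exact Subgroup.mul_mem _ iha ihb
    | inv a _ iha =>
      have : g * a⁻¹ * g⁻¹ = (g * a * g⁻¹)⁻¹ := by group
      rw [this]; exact Subgroup.inv_mem _ iha
  haveI := hWnormal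
  have hQp : IsPGroup p (G ⧸ W) := by
    intro q
    obtain ⟨g, rfl⟩ := QuotientGroup.mk'_surjective W q
    obtain ⟨u, v, hguv, hv, hu, hvcop⟩ := exists_mul_decomp g p
    refine ⟨orderOf g, ?_⟩
    have hvW : v ∈ W := by
      apply Subgroup.subset_closure
      intro hpv
      have : p ∣ 1 := hvcop ▸ Nat.dvd_gcd hpv dvd_rfl
      exact hp.out.one_lt.ne' (Nat.dvd_one.mp this)
    have hmk : (QuotientGroup.mk' W) g = (QuotientGroup.mk' W) u := by
      rw [hguv, map_mul, show (QuotientGroup.mk' W) v = 1 from (QuotientGroup.eq_one_iff v).mpr hvW, mul_one]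
    rw [hmk, ← map_pow, orderOf_dvd_iff_pow_eq_one.mp hu, map_one]
  obtain ⟨n, hn⟩ := IsPGroup.iff_card.mp hQp
  have hWindex : W.index = p ^ n := by rw [Subgroup.index_eq_card]; exact hn
  have hsup : (P : Subgroup G) ⊔ W = ⊤ := by
    rw [← Subgroup.index_eq_one]
    have h1 : ((P : Subgroup G) ⊔ W).index ∣ p ^ n :=
      hWindex ▸ Subgroup.index_dvd_of_le le_sup_right
    have h2 : ((P : Subgroup G) ⊔ W).index ∣ (P : Subgroup G).index :=
      Subgroup.index_dvd_of_le le_sup_left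
    obtain ⟨s, hs, hseq⟩ := (Nat.dvd_prime_pow hp.out).mp h1
    rcases Nat.eq_zero_or_pos s with h0 | h0
    · rw [hseq, h0, pow_zero]
    · exfalso
      apply P.not_dvd_index
      exact dvd_trans (hseq ▸ dvd_pow_self p h0.ne') h2
  have hcen : Subgroup.centralizer (P : Set G) ≤ Subgroup.normalizer ((P : Subgroup G) : Set G) := by
    intro x hx
    rw [Subgroup.mem_normalizer_iff]
    intro g
    constructor
    · intro hg
      have := Subgroup.mem_centralizer_iff.mp hx g hg
      have hxgx : x * g * x⁻¹ = g := by
        rw [← this]; group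
      rw [hxgx]; exact hg
    · intro hg
      have := Subgroup.mem_centralizer_iff.mp hx _ hg
      have : g = x * g * x⁻¹ := by
        have h3 : (x * g * x⁻¹) * x = x * (x * g * x⁻¹) := this
        have h4 : x * g = x * (x * g * x⁻¹) := by
          calc x * g = (x * g * x⁻¹) * x := by group
            _ = x * (x * g * x⁻¹) := h3
        have := mul_left_cancel h4
        exact this.symm ▸ this
      rw [this]; exact hg
  have hnorm : Subgroup.normalizer ((P : Subgroup G) : Set G) = ⊤ := by
    apply le_antisymm le_top
    rw [← hsup]
    exact sup_le Subgroup.le_normalizer (le_trans hWc hcen)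
  exact Subgroup.normalizer_eq_top_iff.mp hnorm

lemma map_lowerCentralSeries_eq_of_surjective {G H : Type*} [Group G] [Group H]
    (f : G →* H) (hf : Function.Surjective f) (n : ℕ) :
    ((⊤ : Subgroup G).lowerCentralSeries n).map f = (⊤ : Subgroup H).lowerCentralSeries n := by
  induction n with
  | zero => exact Subgroup.map_top_of_surjective f hf
  | succ n ih =>
    show Subgroup.map f ⁅(⊤ : Subgroup G).lowerCentralSeries n, ⊤⁆ = ⁅(⊤ : Subgroup H).lowerCentralSeries n, ⊤⁆
    rw [Subgroup.map_commutator, ih, Subgroup.map_top_of_surjective f hf]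

/-- For a finite group `G`, the nilpotent residual `γ∞(G) = ⋂ i, γ_i(G)` is generated by the
commutators `[x,y]` where `x, y` are elements of `G` of mutually coprime orders. -/
theorem nilpotent_residual_eq_closure_coprime_commutators
    (G : Type) [Group G] [Finite G] :
    (⨅ i : ℕ, (⊤ : Subgroup G).lowerCentralSeries i) =
      Subgroup.closure {z : G | ∃ x y : G,
        Nat.Coprime (orderOf x) (orderOf y) ∧ z = ⁅x, y⁆} := by
  set S : Set G := {z : G | ∃ x y : G,
    Nat.Coprime (orderOf x) (orderOf y) ∧ z = ⁅x, y⁆} with hSdef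
  set K : Subgroup G := Subgroup.closure S with hKdef
  have hKnormal : K.Normal := by
    constructor
    intro w hw g
    rw [hKdef] at hw ⊢
    induction hw using Subgroup.closure_induction with
    | mem s hs =>
      apply Subgroup.subset_closure
      obtain ⟨x, y, hxy, rfl⟩ := hs
      refine ⟨g * x * g⁻¹, g * y * g⁻¹, ?_, conjugate_commutatorElement x y g⟩
      have hx : orderOf (g * x * g⁻¹) = orderOf x :=
        (SemiconjBy.orderOf_eq g (by unfold SemiconjBy; group)).symm
      have hy : orderOf (g * y * g⁻¹) = orderOf y :=
        (SemiconjBy.orderOf_eq g (by unfold SemiconjBy; group)).symm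
      rw [hx, hy]; exact hxy
    | one => simpa using Subgroup.one_mem _
    | mul a b _ _ iha ihb =>
      have : g * (a * b) * g⁻¹ = (g * a * g⁻¹) * (g * b * g⁻¹) := by group
      rw [this]; exact Subgroup.mul_mem _ iha ihb
    | inv a _ iha =>
      have : g * a⁻¹ * g⁻¹ = (g * a * g⁻¹)⁻¹ := by group
      rw [this]; exact Subgroup.inv_mem _ iha
  haveI := hKnormal
  apply le_antisymm
  · -- γ∞ ≤ K
    have hcomm : ∀ a b : G ⧸ K, (orderOf a).Coprime (orderOf b) → Commute a b := by
      intro a b hab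
      obtain ⟨x, rfl⟩ := QuotientGroup.mk'_surjective K a
      obtain ⟨y, rfl⟩ := QuotientGroup.mk'_surjective K b
      obtain ⟨u, v, hxuv, hv, hu, hvcop⟩ :=
        exists_mul_decomp x (orderOf ((QuotientGroup.mk' K) x))
      obtain ⟨w, t, hywt, ht, hw, htcop⟩ :=
        exists_mul_decomp y (orderOf ((QuotientGroup.mk' K) y))
      have triv : ∀ (z w : G), w ∈ Subgroup.zpowers z →
          (orderOf w).Coprime (orderOf ((QuotientGroup.mk' K) z)) →
          (QuotientGroup.mk' K) w = 1 := by
        intro z w hwz hcw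
        have h1 : orderOf ((QuotientGroup.mk' K) w) ∣ orderOf w := orderOf_map_dvd _ w
        have h2 : (QuotientGroup.mk' K) w ∈ Subgroup.zpowers ((QuotientGroup.mk' K) z) := by
          obtain ⟨j, hj⟩ := Subgroup.mem_zpowers_iff.mp hwz
          exact Subgroup.mem_zpowers_iff.mpr ⟨j, by rw [← hj, map_zpow]⟩
        have h3 := Nat.dvd_gcd h1 (orderOf_dvd_of_mem_zpowers h2)
        rw [Nat.coprime_iff_gcd_eq_one.mp hcw] at h3
        exact orderOf_eq_one_iff.mp (Nat.dvd_one.mp h3)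
      have hmku : (QuotientGroup.mk' K) u = (QuotientGroup.mk' K) x := by
        rw [hxuv, map_mul, triv x v hv hvcop, mul_one]
      have hmkw : (QuotientGroup.mk' K) w = (QuotientGroup.mk' K) y := by
        rw [hywt, map_mul, triv y t ht htcop, mul_one]
      have hcop : (orderOf u).Coprime (orderOf w) := by
        rw [Nat.coprime_iff_gcd_eq_one]
        by_contra hne
        obtain ⟨q, hq, hqd⟩ := Nat.exists_prime_and_dvd hne
        have h5 : q ∣ orderOf ((QuotientGroup.mk' K) x) :=
          hq.dvd_of_dvd_pow ((hqd.trans (Nat.gcd_dvd_left _ _)).trans hu)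
        have h6 : q ∣ orderOf ((QuotientGroup.mk' K) y) :=
          hq.dvd_of_dvd_pow ((hqd.trans (Nat.gcd_dvd_right _ _)).trans hw)
        have h7 := Nat.dvd_gcd h5 h6
        rw [Nat.coprime_iff_gcd_eq_one.mp hab] at h7
        exact hq.one_lt.ne' (Nat.dvd_one.mp h7)
      have hmem : ⁅u, w⁆ ∈ K := Subgroup.subset_closure ⟨u, w, hcop, rfl⟩
      have hone : ⁅(QuotientGroup.mk' K) x, (QuotientGroup.mk' K) y⁆ = 1 := by
        rw [← hmku, ← hmkw, ← map_commutatorElement]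
        exact (QuotientGroup.eq_one_iff _).mpr hmem
      exact commutatorElement_eq_one_iff_commute.mp hone
    haveI : Group.IsNilpotent (G ⧸ K) := isNilpotent_of_coprime_commute _ hcomm
    obtain ⟨j, hj⟩ := Subgroup.nilpotent_iff_lowerCentralSeries.mp this
    refine le_trans (iInf_le _ j) ?_
    have hmap : ((⊤ : Subgroup G).lowerCentralSeries j).map (QuotientGroup.mk' K) = ⊥ := by
      apply le_bot_iff.mp
      rw [← hj]
      exact Subgroup.lowerCentralSeries.map (QuotientGroup.mk' K) j
    have := (Subgroup.map_eq_bot_iff _).mp hmap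
    rwa [QuotientGroup.ker_mk'] at this
  · -- K ≤ γ∞
    rw [hKdef, Subgroup.closure_le]
    rintro z ⟨x, y, hxy, rfl⟩
    rw [SetLike.mem_coe, Subgroup.mem_iInf]
    intro i
    set N := (⊤ : Subgroup G).lowerCentralSeries i with hNdef
    haveI : N.Normal := Subgroup.lowerCentralSeries_normal _ i
    haveI : Group.IsNilpotent (G ⧸ N) := by
      rw [Subgroup.nilpotent_iff_lowerCentralSeries]
      refine ⟨i, ?_⟩
      rw [← map_lowerCentralSeries_eq_of_surjective (QuotientGroup.mk' N)
        (QuotientGroup.mk'_surjective N) i]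
      rw [Subgroup.map_eq_bot_iff, QuotientGroup.ker_mk']
    have hc : Commute ((QuotientGroup.mk' N) x) ((QuotientGroup.mk' N) y) := by
      apply commute_of_coprime_orderOf_aux
      exact Nat.Coprime.coprime_dvd_right (orderOf_map_dvd _ y)
        (Nat.Coprime.coprime_dvd_left (orderOf_map_dvd _ x) hxy)
    have : (QuotientGroup.mk' N) ⁅x, y⁆ = 1 := by
      rw [map_commutatorElement]
      exact commutatorElement_eq_one_iff_commute.mpr hc
    exact (QuotientGroup.eq_one_iff _).mp this
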